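/- Cutoff phenomenon in Example 1: define, for Γ ∈ [0,1], G(Γ) := max over p₁,p₂,p₃ ∈ [0,1] of (1/2)[h₂(q₀/2) − q₀] + (1/2)[h₂((1−q₁)/2) − (1−q₁)], where q₀ = (1−Γ)p₁ + Γp₂ and q₁ = (1−Γ)p₁ + Γp₃. Then for every Γ ∈ [1/5, 1], G(Γ) = G(1) = h₂(1/5) − 2/5; that is, probing a fraction 1/5 of the states already achieves the full-observation capacity. -/

import Mathlib

/-!
Cutoff phenomenon in Example 1.
-/

/-- The binary entropy function (base 2), with `h₂ 0 = h₂ 1 = 0`. -/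
noncomputable def binH (p : ℝ) : ℝ :=
  -(p * Real.logb 2 p) - ((1 - p) * Real.logb 2 (1 - p))

/-- The capacity expression of Theorem 1 for the channel of Example 1
(`α = β = ε = 1/2`): for `Γ ∈ [0,1]`,
`G(Γ) = max_{p₁,p₂,p₃ ∈ [0,1]} (1/2)[h₂(q₀/2) − q₀] + (1/2)[h₂((1−q₁)/2) − (1−q₁)]`
with `q₀ = (1−Γ)p₁ + Γp₂` and `q₁ = (1−Γ)p₁ + Γp₃`. -/
noncomputable def Gcap (Γ : ℝ) : ℝ :=
  sSup {r : ℝ | ∃ p₁ p₂ p₃ : ℝ,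
    p₁ ∈ Set.Icc (0 : ℝ) 1 ∧ p₂ ∈ Set.Icc (0 : ℝ) 1 ∧ p₃ ∈ Set.Icc (0 : ℝ) 1 ∧
    r = (1 / 2) * (binH (((1 - Γ) * p₁ + Γ * p₂) / 2) - ((1 - Γ) * p₁ + Γ * p₂))
      + (1 / 2) * (binH ((1 - ((1 - Γ) * p₁ + Γ * p₃)) / 2)
          - (1 - ((1 - Γ) * p₁ + Γ * p₃)))}

/-- Gibbs-type inequality for the tangent bound. -/
lemma binH_gibbs : ∀ x : ℝ, 0 ≤ x → x ≤ 1 →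
    x * (Real.log (1/5) - Real.log x) + (1-x) * (Real.log (4/5) - Real.log (1-x)) ≤ 0 := by
  intro x hx0 hx1
  have hlog15 : Real.log (1/5) ≤ 0 := Real.log_nonpos (by norm_num) (by norm_num)
  have hlog45 : Real.log (4/5) ≤ 0 := Real.log_nonpos (by norm_num) (by norm_num)
  have h5 : (0:ℝ) ≤ Real.log 5 := Real.log_nonneg (by norm_num)
  have h54 : (0:ℝ) ≤ Real.log (5/4) := Real.log_nonneg (by norm_num)
  rcases eq_or_lt_of_le hx0 with h0 | h0
  · simp [← h0, Real.log_one]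
    nlinarith [Real.log_div (show (4:ℝ) ≠ 0 by norm_num) (show (5:ℝ) ≠ 0 by norm_num), Real.log_nonneg (show (1:ℝ) ≤ 5/4 by norm_num)]
  rcases eq_or_lt_of_le hx1 with h1 | h1
  · simp [h1, Real.log_one]
    nlinarith [Real.log_div (show (1:ℝ) ≠ 0 by norm_num) (show (5:ℝ) ≠ 0 by norm_num), Real.log_one, h5]
  have a1 : x * (Real.log (1/5) - Real.log x) ≤ 1/5 - x := by
    have h := Real.log_le_sub_one_of_pos (show (0:ℝ) < (1/5)/x by positivity)
    rw [Real.log_div (by norm_num) (ne_of_gt h0)] at h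
    have hm := mul_le_mul_of_nonneg_left h (le_of_lt h0)
    have hx' : x * ((1/5)/x) = 1/5 := by field_simp
    nlinarith [hm, hx']
  have a2 : (1-x) * (Real.log (4/5) - Real.log (1-x)) ≤ 4/5 - (1-x) := by
    have h1x : (0:ℝ) < 1 - x := by linarith
    have h := Real.log_le_sub_one_of_pos (show (0:ℝ) < (4/5)/(1-x) by positivity)
    rw [Real.log_div (by norm_num) (ne_of_gt h1x)] at h
    have hm := mul_le_mul_of_nonneg_left h (le_of_lt h1x)
    have hx' : (1-x) * ((4/5)/(1-x)) = 4/5 := by field_simp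
    nlinarith [hm, hx']
  linarith

/-- Tangent-line bound for binary entropy at `p = 1/5`. -/
lemma binH_tangent : ∀ x : ℝ, 0 ≤ x → x ≤ 1 → binH x ≤ binH (1/5) + 2 * (x - 1/5) := by
  intro x hx0 hx1
  have hL : (0:ℝ) < Real.log 2 := Real.log_pos (by norm_num)
  have h4 : Real.log (4/5) = 2 * Real.log 2 + Real.log (1/5) := by
    rw [show (4:ℝ)/5 = 4 * (1/5) by norm_num,
      Real.log_mul (by norm_num) (by norm_num),
      show (4:ℝ) = 2^2 by norm_num, Real.log_pow]
    push_cast; ring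
  have hG := binH_gibbs x hx0 hx1
  have hkey : -(x * Real.log x) - (1-x) * Real.log (1-x) ≤
      -(1/5 * Real.log (1/5)) - (4/5) * Real.log (4/5) + 2*(x-1/5)*Real.log 2 := by
    nlinarith [hG, h4]
  unfold binH
  rw [Real.logb, Real.logb, Real.logb, Real.logb]
  calc -(x * (Real.log x / Real.log 2)) - (1 - x) * (Real.log (1 - x) / Real.log 2)
      = (-(x * Real.log x) - (1-x) * Real.log (1-x)) / Real.log 2 := by ring
    _ ≤ (-(1/5 * Real.log (1/5)) - (4/5) * Real.log (4/5) + 2*(x-1/5)*Real.log 2) / Real.log 2 :=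
        (div_le_div_iff_of_pos_right hL).mpr hkey
    _ = -(1 / 5 * (Real.log (1 / 5) / Real.log 2)) - (1 - 1 / 5) * (Real.log (1 - 1 / 5) / Real.log 2)
          + 2 * (x - 1 / 5) := by
        rw [show (1:ℝ) - 1/5 = 4/5 by norm_num]
        field_simp

/-- The maximum of `h₂(q/2) − q` over `q ∈ [0,1]` is attained at `q = 2/5`. -/
lemma binH_half_bound : ∀ q : ℝ, 0 ≤ q → q ≤ 1 → binH (q/2) - q ≤ binH (1/5) - 2/5 := by
  intro q h0 h1
  have := binH_tangent (q/2) (by linarith) (by linarith)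
  linarith

lemma Gcap_val : ∀ Γ : ℝ, 1 / 5 ≤ Γ → Γ ≤ 1 → Gcap Γ = binH (1 / 5) - 2 / 5 := by
  intro Γ hΓl hΓu
  have hΓ0 : (0:ℝ) < Γ := by linarith
  set M : ℝ := binH (1/5) - 2/5 with hM
  have hmem : M ∈ {r : ℝ | ∃ p₁ p₂ p₃ : ℝ,
      p₁ ∈ Set.Icc (0 : ℝ) 1 ∧ p₂ ∈ Set.Icc (0 : ℝ) 1 ∧ p₃ ∈ Set.Icc (0 : ℝ) 1 ∧
      r = (1 / 2) * (binH (((1 - Γ) * p₁ + Γ * p₂) / 2) - ((1 - Γ) * p₁ + Γ * p₂))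
        + (1 / 2) * (binH ((1 - ((1 - Γ) * p₁ + Γ * p₃)) / 2)
            - (1 - ((1 - Γ) * p₁ + Γ * p₃)))} := by
    refine ⟨1/2, (5*Γ-1)/(10*Γ), (5*Γ+1)/(10*Γ), ?_, ?_, ?_, ?_⟩
    · constructor <;> norm_num
    · constructor
      · apply div_nonneg <;> linarith
      · rw [div_le_one (by linarith)]; linarith
    · constructor
      · apply div_nonneg <;> linarith
      · rw [div_le_one (by linarith)]; linarith
    · have e1 : (1 - Γ) * (1/2) + Γ * ((5*Γ-1)/(10*Γ)) = 2/5 := by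
        field_simp; ring
      have e2 : (1 - Γ) * (1/2) + Γ * ((5*Γ+1)/(10*Γ)) = 3/5 := by
        field_simp; ring
      rw [e1, e2]
      norm_num [hM]
      ring
  have hub : ∀ r ∈ {r : ℝ | ∃ p₁ p₂ p₃ : ℝ,
      p₁ ∈ Set.Icc (0 : ℝ) 1 ∧ p₂ ∈ Set.Icc (0 : ℝ) 1 ∧ p₃ ∈ Set.Icc (0 : ℝ) 1 ∧
      r = (1 / 2) * (binH (((1 - Γ) * p₁ + Γ * p₂) / 2) - ((1 - Γ) * p₁ + Γ * p₂))
        + (1 / 2) * (binH ((1 - ((1 - Γ) * p₁ + Γ * p₃)) / 2)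
            - (1 - ((1 - Γ) * p₁ + Γ * p₃)))}, r ≤ M := by
    rintro r ⟨p₁, p₂, p₃, ⟨hp₁0, hp₁1⟩, ⟨hp₂0, hp₂1⟩, ⟨hp₃0, hp₃1⟩, rfl⟩
    have hq₀0 : 0 ≤ (1 - Γ) * p₁ + Γ * p₂ := by
      have := mul_nonneg (show (0:ℝ) ≤ 1 - Γ by linarith) hp₁0
      have := mul_nonneg (le_of_lt hΓ0) hp₂0
      linarith
    have hq₀1 : (1 - Γ) * p₁ + Γ * p₂ ≤ 1 := by
      have h1 := mul_le_mul_of_nonneg_left hp₁1 (show (0:ℝ) ≤ 1 - Γ by linarith)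
      have h2 := mul_le_mul_of_nonneg_left hp₂1 (le_of_lt hΓ0)
      linarith
    have hq₁0 : 0 ≤ (1 - Γ) * p₁ + Γ * p₃ := by
      have := mul_nonneg (show (0:ℝ) ≤ 1 - Γ by linarith) hp₁0
      have := mul_nonneg (le_of_lt hΓ0) hp₃0
      linarith
    have hq₁1 : (1 - Γ) * p₁ + Γ * p₃ ≤ 1 := by
      have h1 := mul_le_mul_of_nonneg_left hp₁1 (show (0:ℝ) ≤ 1 - Γ by linarith)
      have h2 := mul_le_mul_of_nonneg_left hp₃1 (le_of_lt hΓ0)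
      linarith
    have k0 := binH_half_bound ((1 - Γ) * p₁ + Γ * p₂) hq₀0 hq₀1
    have k1 := binH_half_bound (1 - ((1 - Γ) * p₁ + Γ * p₃)) (by linarith) (by linarith)
    rw [hM]
    linarith
  unfold Gcap
  apply le_antisymm
  · exact csSup_le ⟨M, hmem⟩ hub
  · exact le_csSup ⟨M, hub⟩ hmem

/-- **Cutoff phenomenon in Example 1.** For every `Γ ∈ [1/5, 1]`,
`G(Γ) = G(1) = h₂(1/5) − 2/5`: probing a fraction `1/5` of the states already
achieves the full-observation capacity. -/
theorem cutoff_example_one :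
    ∀ Γ : ℝ, 1 / 5 ≤ Γ → Γ ≤ 1 →
      Gcap Γ = Gcap 1 ∧ Gcap 1 = binH (1 / 5) - 2 / 5 := by
  intro Γ h1 h2
  have hΓ := Gcap_val Γ h1 h2
  have h1' := Gcap_val 1 (by norm_num) le_rfl
  exact ⟨hΓ.trans h1'.symm, h1'⟩
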